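/- Let X, d be natural numbers with X ≤ d. Then there is an interval I ⊆ [−1, 1] containing sin X such that for all natural numbers Y, if sin Y ∈ I then X is the best approximate of Y up to d (Y|_d = X) and sin X ≤ sin Y. -/

import Mathlib

/-- `BestApp X d Y` says that `Y` is the best approximate of `X` up to `d`
(written `X|_d = Y`): `Y ≤ d`, `sin Y ≤ sin X`, and for every `Z ≤ d` with
`Z ≠ Y` and `sin Z ≤ sin X` one has `sin Z < sin Y`. -/
def BestApp (X d Y : ℕ) : Prop :=
  Y ≤ d ∧ Real.sin Y ≤ Real.sin X ∧
    ∀ Z : ℕ, Z ≤ d → Z ≠ Y → Real.sin Z ≤ Real.sin X → Real.sin Z < Real.sin Y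

lemma sin_nat_injective : Function.Injective (fun n : ℕ => Real.sin n) := by
  intro m n h
  simp only at h
  rw [Real.sin_eq_sin_iff] at h
  obtain ⟨k, hk | hk⟩ := h
  · rcases eq_or_ne k 0 with rfl | hk0
    · simp at hk
      exact_mod_cast hk.symm
    · exfalso
      have hirr : Irrational (((2 * k : ℤ) : ℝ) * Real.pi) :=
        Irrational.intCast_mul irrational_pi (by omega : (2 * k : ℤ) ≠ 0)
      have : ((2 * k : ℤ) : ℝ) * Real.pi = ((n : ℤ) - (m : ℤ) : ℤ) := by
        push_cast
        linarith [hk]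
      exact (this ▸ hirr) ⟨((n : ℤ) - (m : ℤ) : ℤ), by push_cast; ring⟩
  · exfalso
    have hirr : Irrational (((2 * k + 1 : ℤ)) * Real.pi) :=
      Irrational.intCast_mul irrational_pi (by omega : (2 * k + 1 : ℤ) ≠ 0)
    have : ((2 * k + 1 : ℤ) : ℝ) * Real.pi = ((n : ℤ) + (m : ℤ) : ℤ) := by
      push_cast
      linarith [hk]
    exact (this ▸ hirr) ⟨((n : ℤ) + (m : ℤ) : ℤ), by push_cast; ring⟩

/-- **Lemma 3.3.** If `X ≤ d`, there is an interval `I ⊆ [−1, 1]` containing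
`sin X` such that for every natural `Y` with `sin Y ∈ I`, `X` is the best
approximate of `Y` up to `d` and `sin X ≤ sin Y`. -/
theorem exists_interval_bestApp (X d : ℕ) (hXd : X ≤ d) :
    ∃ I : Set ℝ, I.OrdConnected ∧ I ⊆ Set.Icc (-1) 1 ∧ Real.sin X ∈ I ∧
      ∀ Y : ℕ, Real.sin Y ∈ I → BestApp Y d X ∧ Real.sin X ≤ Real.sin Y := by
  classical
  set S : Finset ℕ := (Finset.range (d + 1)).filter (fun Z => Real.sin X < Real.sin Z) with hS
  -- key fact: for Z ≤ d, Z ≠ X, sin Z ≤ sin X or Z ∈ S, and sin Z ≠ sin X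
  have hne : ∀ Z : ℕ, Z ≠ X → Real.sin Z ≠ Real.sin X := fun Z hZ h =>
    hZ (sin_nat_injective h)
  rcases S.eq_empty_or_nonempty with hSe | hSne
  · -- no natural ≤ d has larger sine: take I = [sin X, 1]
    refine ⟨Set.Icc (Real.sin X) 1, Set.ordConnected_Icc, ?_, ?_, ?_⟩
    · exact fun x hx => ⟨le_trans (Real.neg_one_le_sin _) hx.1, hx.2⟩
    · exact ⟨le_refl _, Real.sin_le_one _⟩
    · intro Y hY
      refine ⟨⟨hXd, hY.1, ?_⟩, hY.1⟩
      intro Z hZd hZX hZY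
      have hZS : Z ∉ S := hSe ▸ Finset.notMem_empty Z
      simp only [hS, Finset.mem_filter, Finset.mem_range] at hZS
      have h1 : ¬ Real.sin X < Real.sin Z := fun h => hZS ⟨by omega, h⟩
      exact lt_of_le_of_ne (not_lt.mp h1) (hne Z hZX)
  · -- let b be the minimal sine value above sin X among naturals ≤ d
    have hne' : (S.image fun Z : ℕ => Real.sin Z).Nonempty := hSne.image (fun Z : ℕ => Real.sin Z)
    set b : ℝ := (S.image fun Z : ℕ => Real.sin Z).min' hne' with hb
    have hbX : Real.sin X < b := by
      obtain ⟨Z, hZ, hZb⟩ := Finset.mem_image.mp ((S.image fun Z : ℕ => Real.sin Z).min'_mem hne')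
      simp only [hS, Finset.mem_filter] at hZ
      rw [hb, ← hZb]; exact hZ.2
    have hb1 : b ≤ 1 := by
      obtain ⟨Z, hZ, hZb⟩ := Finset.mem_image.mp ((S.image fun Z : ℕ => Real.sin Z).min'_mem hne')
      rw [hb, ← hZb]; exact Real.sin_le_one _
    refine ⟨Set.Ico (Real.sin X) b, Set.ordConnected_Ico, ?_, ?_, ?_⟩
    · exact fun x hx => ⟨le_trans (Real.neg_one_le_sin _) hx.1, le_trans (le_of_lt hx.2) hb1⟩
    · exact ⟨le_refl _, hbX⟩
    · intro Y hY
      refine ⟨⟨hXd, hY.1, ?_⟩, hY.1⟩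
      intro Z hZd hZX hZY
      by_contra h
      push_neg at h
      have hXZ : Real.sin X < Real.sin Z := lt_of_le_of_ne h (Ne.symm (hne Z hZX))
      have hZS : Z ∈ S := by
        simp only [hS, Finset.mem_filter, Finset.mem_range]
        exact ⟨by omega, hXZ⟩
      have : b ≤ Real.sin Z :=
        Finset.min'_le _ _ (Finset.mem_image_of_mem _ hZS)
      linarith [hY.2]
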